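/- In the three-qubit space ℂ² ⊗ ℂ² ⊗ ℂ², let G be the linear span of the three vectors e_0⊗e_0⊗e_1 + e_0⊗e_1⊗e_0 − e_1⊗e_0⊗e_0, e_0⊗e_1⊗e_0 + e_0⊗e_1⊗e_1 − e_1⊗e_0⊗e_1, and e_0⊗e_0⊗e_0 − e_1⊗e_1⊗e_1. Then dim G = 3 and G is a genuinely entangled subspace: every nonzero v ∈ G is genuinely multiparty entangled, i.e., v cannot be written as φ ⊗ χ across any of the three bipartitions {1}|{2,3}, {2}|{1,3}, {3}|{1,2} (under the corresponding canonical factor-reordering isomorphisms). -/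

import Mathlib

noncomputable section

/-- The `N`-qudit Hilbert space `(ℂ^d)^{⊗N}`, realized as the Euclidean space whose
coordinates are indexed by tuples of local indices. -/
abbrev QSpace (N d : ℕ) := EuclideanSpace ℂ (Fin N → Fin d)

/-- `v` is biproduct: for some bipartition `S|Sᶜ` of the parties, `v = φ ⊗ χ` with
`φ` a vector on the parties in `S` and `χ` a vector on the parties in `Sᶜ`
(under the canonical factor-reordering isomorphism). -/
def Biproduct {N d : ℕ} (v : QSpace N d) : Prop :=
  ∃ S : Set (Fin N), S.Nonempty ∧ S ≠ Set.univ ∧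
    ∃ (φ : ((i : S) → Fin d) → ℂ) (χ : ((i : ↥Sᶜ) → Fin d) → ℂ),
      ∀ f : Fin N → Fin d, v f = φ (fun i => f i) * χ (fun i => f i)

/-- A vector is genuinely multiparty entangled if it is nonzero and not biproduct. -/
def GME {N d : ℕ} (v : QSpace N d) : Prop :=
  v ≠ 0 ∧ ¬ Biproduct v

/-- A genuinely entangled subspace: all its nonzero vectors are GME. -/
def IsGES {N d : ℕ} (G : Submodule ℂ (QSpace N d)) : Prop :=
  ∀ v ∈ G, v ≠ 0 → GME v

/-- The standard basis vector `e_{x 0} ⊗ e_{x 1} ⊗ e_{x 2}` of `ℂ² ⊗ ℂ² ⊗ ℂ²`. -/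
def bvec (x : Fin 3 → Fin 2) : QSpace 3 2 :=
  WithLp.toLp 2 (fun f => if f = x then 1 else 0)

/-! ### Auxiliary definitions -/

def u1 : QSpace 3 2 := bvec ![0, 0, 1] + bvec ![0, 1, 0] - bvec ![1, 0, 0]
def u2 : QSpace 3 2 := bvec ![0, 1, 0] + bvec ![0, 1, 1] - bvec ![1, 0, 1]
def u3 : QSpace 3 2 := bvec ![0, 0, 0] - bvec ![1, 1, 1]

lemma c000 (a b c : ℂ) : (a • u1 + b • u2 + c • u3) ![0,0,0] = c := by
  simp (config := { decide := true }) [u1, u2, u3, bvec]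
lemma c001 (a b c : ℂ) : (a • u1 + b • u2 + c • u3) ![0,0,1] = a := by
  simp (config := { decide := true }) [u1, u2, u3, bvec]
lemma c010 (a b c : ℂ) : (a • u1 + b • u2 + c • u3) ![0,1,0] = a + b := by
  simp (config := { decide := true }) [u1, u2, u3, bvec]
lemma c011 (a b c : ℂ) : (a • u1 + b • u2 + c • u3) ![0,1,1] = b := by
  simp (config := { decide := true }) [u1, u2, u3, bvec]
lemma c100 (a b c : ℂ) : (a • u1 + b • u2 + c • u3) ![1,0,0] = -a := by
  simp (config := { decide := true }) [u1, u2, u3, bvec]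
lemma c101 (a b c : ℂ) : (a • u1 + b • u2 + c • u3) ![1,0,1] = -b := by
  simp (config := { decide := true }) [u1, u2, u3, bvec]
lemma c110 (a b c : ℂ) : (a • u1 + b • u2 + c • u3) ![1,1,0] = 0 := by
  simp (config := { decide := true }) [u1, u2, u3, bvec]
lemma c111 (a b c : ℂ) : (a • u1 + b • u2 + c • u3) ![1,1,1] = -c := by
  simp (config := { decide := true }) [u1, u2, u3, bvec]

lemma rank1 {v : QSpace 3 2} {S : Set (Fin 3)}
    (φ : ((i : S) → Fin 2) → ℂ) (χ : ((i : ↥Sᶜ) → Fin 2) → ℂ)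
    (h : ∀ f, v f = φ (fun i => f i) * χ (fun i => f i))
    (f g f' g' : Fin 3 → Fin 2)
    (hf1 : ∀ i ∈ S, f' i = f i) (hf2 : ∀ i ∉ S, f' i = g i)
    (hg1 : ∀ i ∈ S, g' i = g i) (hg2 : ∀ i ∉ S, g' i = f i) :
    v f * v g = v f' * v g' := by
  rw [h f, h g, h f', h g']
  have e1 : (fun i : S => f' i) = (fun i : S => f i) := funext fun i => hf1 i i.2
  have e2 : (fun i : ↥Sᶜ => f' i) = (fun i : ↥Sᶜ => g i) := funext fun i => hf2 i i.2
  have e3 : (fun i : S => g' i) = (fun i : S => g i) := funext fun i => hg1 i i.2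
  have e4 : (fun i : ↥Sᶜ => g' i) = (fun i : ↥Sᶜ => f i) := funext fun i => hg2 i i.2
  rw [e1, e2, e3, e4]; ring

/-- In the three-qubit space, the span `G` of
`|001⟩ + |010⟩ − |100⟩`, `|010⟩ + |011⟩ − |101⟩` and `|000⟩ − |111⟩` has dimension 3 and
is a genuinely entangled subspace: every nonzero vector of `G` is GME. -/
theorem stmt17 :
    Module.finrank ℂ (Submodule.span ℂ
      {bvec ![0, 0, 1] + bvec ![0, 1, 0] - bvec ![1, 0, 0],
       bvec ![0, 1, 0] + bvec ![0, 1, 1] - bvec ![1, 0, 1],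
       bvec ![0, 0, 0] - bvec ![1, 1, 1]}) = 3 ∧
    IsGES (Submodule.span ℂ
      {bvec ![0, 0, 1] + bvec ![0, 1, 0] - bvec ![1, 0, 0],
       bvec ![0, 1, 0] + bvec ![0, 1, 1] - bvec ![1, 0, 1],
       bvec ![0, 0, 0] - bvec ![1, 1, 1]}) := by
  show Module.finrank ℂ (Submodule.span ℂ {u1, u2, u3}) = 3 ∧
    IsGES (Submodule.span ℂ {u1, u2, u3})
  constructor
  · -- dimension
    have hli : LinearIndependent ℂ ![u1, u2, u3] := by
      rw [Fintype.linearIndependent_iff]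
      intro g hg
      have h1 : g 0 • u1 + g 1 • u2 + g 2 • u3 = 0 := by
        simpa [Fin.sum_univ_three] using hg
      have e0 : (g 0 • u1 + g 1 • u2 + g 2 • u3) ![0,0,1] = (0 : QSpace 3 2) ![0,0,1] := by
        rw [h1]
      have e1 : (g 0 • u1 + g 1 • u2 + g 2 • u3) ![0,1,1] = (0 : QSpace 3 2) ![0,1,1] := by
        rw [h1]
      have e2 : (g 0 • u1 + g 1 • u2 + g 2 • u3) ![0,0,0] = (0 : QSpace 3 2) ![0,0,0] := by
        rw [h1]
      rw [c001] at e0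
      rw [c011] at e1
      rw [c000] at e2
      intro i
      fin_cases i
      · simpa using e0
      · simpa using e1
      · simpa using e2
    have hcard := finrank_span_eq_card hli
    rw [show Set.range ![u1, u2, u3] = {u1, u2, u3} by
      ext x
      simp [Fin.exists_fin_succ, Matrix.range_cons, Matrix.range_empty]
      tauto] at hcard
    simpa using hcard
  · -- GES
    intro v hv hvne
    have hmem : ∃ a b c : ℂ, v = a • u1 + b • u2 + c • u3 := by
      rw [show ({u1, u2, u3} : Set (QSpace 3 2)) = insert u1 {u2, u3} from rfl,
        Submodule.mem_span_insert] at hv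
      obtain ⟨a, z, hz, rfl⟩ := hv
      rw [show ({u2, u3} : Set (QSpace 3 2)) = insert u2 {u3} from rfl,
        Submodule.mem_span_insert] at hz
      obtain ⟨b, w, hw, rfl⟩ := hz
      rw [Submodule.mem_span_singleton] at hw
      obtain ⟨c, rfl⟩ := hw
      exact ⟨a, b, c, by abel⟩
    obtain ⟨a, b, c, rfl⟩ := hmem
    refine ⟨hvne, ?_⟩
    rintro ⟨S, ⟨s0, hs0⟩, hSuniv, φ, χ, hfac⟩
    set v : QSpace 3 2 := a • u1 + b • u2 + c • u3 with hvdef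
    have habc : ¬ (a = 0 ∧ b = 0 ∧ c = 0) := by
      rintro ⟨rfl, rfl, rfl⟩
      exact hvne (by rw [hvdef]; simp)
    have h000 : v ![0,0,0] = c := c000 a b c
    have h001 : v ![0,0,1] = a := c001 a b c
    have h010 : v ![0,1,0] = a + b := c010 a b c
    have h011 : v ![0,1,1] = b := c011 a b c
    have h100 : v ![1,0,0] = -a := c100 a b c
    have h101 : v ![1,0,1] = -b := c101 a b c
    have h110 : v ![1,1,0] = 0 := c110 a b c
    have h111 : v ![1,1,1] = -c := c111 a b c
    by_cases m0 : (0 : Fin 3) ∈ S <;> by_cases m1 : (1 : Fin 3) ∈ S <;>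
      by_cases m2 : (2 : Fin 3) ∈ S
    · -- all in : S = univ
      exact hSuniv (Set.eq_univ_iff_forall.mpr fun i => by fin_cases i <;> assumption)
    · -- 0,1 ∈ S, 2 ∉ S : cut at party 2
      have key : ∀ f g f' g' : Fin 3 → Fin 2, f' 0 = g 0 → f' 1 = g 1 → f' 2 = f 2 →
          g' 0 = f 0 → g' 1 = f 1 → g' 2 = g 2 → v f * v g = v f' * v g' := by
        intro f g f' g' p1 p2 p3 q1 q2 q3
        refine (rank1 φ χ hfac f g g' f' ?_ ?_ ?_ ?_).trans (mul_comm _ _)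
        · intro i hi; fin_cases i
          exacts [q1, q2, absurd hi m2]
        · intro i hi; fin_cases i
          exacts [absurd m0 hi, absurd m1 hi, q3]
        · intro i hi; fin_cases i
          exacts [p1, p2, absurd hi m2]
        · intro i hi; fin_cases i
          exacts [absurd m0 hi, absurd m1 hi, p3]
      have e1 := key ![1,1,0] ![0,0,1] ![0,0,0] ![1,1,1] rfl rfl rfl rfl rfl rfl
      have e2 := key ![0,1,0] ![1,0,1] ![1,0,0] ![0,1,1] rfl rfl rfl rfl rfl rfl
      have e3 := key ![0,0,0] ![0,1,1] ![0,1,0] ![0,0,1] rfl rfl rfl rfl rfl rfl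
      rw [h110, h001, h000, h111] at e1
      rw [h010, h101, h100, h011] at e2
      rw [h000, h011, h010, h001] at e3
      have hc : c = 0 := mul_self_eq_zero.mp (by linear_combination e1)
      have hb : b = 0 := mul_self_eq_zero.mp (by linear_combination -e2)
      have ha : a = 0 := mul_self_eq_zero.mp (by linear_combination -e3 - a*hb + c*hb)
      exact habc ⟨ha, hb, hc⟩
    · -- 0,2 ∈ S, 1 ∉ S : cut at party 1
      have key : ∀ f g f' g' : Fin 3 → Fin 2, f' 0 = g 0 → f' 1 = f 1 → f' 2 = g 2 →
          g' 0 = f 0 → g' 1 = g 1 → g' 2 = f 2 → v f * v g = v f' * v g' := by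
        intro f g f' g' p1 p2 p3 q1 q2 q3
        refine (rank1 φ χ hfac f g g' f' ?_ ?_ ?_ ?_).trans (mul_comm _ _)
        · intro i hi; fin_cases i
          exacts [q1, absurd hi m1, q3]
        · intro i hi; fin_cases i
          exacts [absurd m0 hi, q2, absurd m2 hi]
        · intro i hi; fin_cases i
          exacts [p1, absurd hi m1, p3]
        · intro i hi; fin_cases i
          exacts [absurd m0 hi, p2, absurd m2 hi]
      have e1 := key ![1,0,0] ![0,1,0] ![0,0,0] ![1,1,0] rfl rfl rfl rfl rfl rfl
      have e2 := key ![1,0,0] ![0,1,1] ![0,0,1] ![1,1,0] rfl rfl rfl rfl rfl rfl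
      have e3 := key ![0,0,0] ![1,1,1] ![1,0,1] ![0,1,0] rfl rfl rfl rfl rfl rfl
      have e4 := key ![0,0,1] ![1,1,1] ![1,0,1] ![0,1,1] rfl rfl rfl rfl rfl rfl
      rw [h100, h010, h000, h110] at e1
      rw [h100, h011, h001, h110] at e2
      rw [h000, h111, h101, h010] at e3
      rw [h001, h111, h101, h011] at e4
      have ha : a = 0 := mul_self_eq_zero.mp (by linear_combination -e1 + e2)
      have hb : b = 0 := mul_self_eq_zero.mp (by linear_combination e4 + c*ha)
      have hc : c = 0 := mul_self_eq_zero.mp (by linear_combination -e3 + b*ha + b*hb)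
      exact habc ⟨ha, hb, hc⟩
    · -- 0 ∈ S, 1,2 ∉ S : cut at party 0
      have key : ∀ f g f' g' : Fin 3 → Fin 2, f' 0 = f 0 → f' 1 = g 1 → f' 2 = g 2 →
          g' 0 = g 0 → g' 1 = f 1 → g' 2 = f 2 → v f * v g = v f' * v g' := by
        intro f g f' g' p1 p2 p3 q1 q2 q3
        refine rank1 φ χ hfac f g f' g' ?_ ?_ ?_ ?_
        · intro i hi; fin_cases i
          exacts [p1, absurd hi m1, absurd hi m2]
        · intro i hi; fin_cases i
          exacts [absurd m0 hi, p2, p3]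
        · intro i hi; fin_cases i
          exacts [q1, absurd hi m1, absurd hi m2]
        · intro i hi; fin_cases i
          exacts [absurd m0 hi, q2, q3]
      have e1 := key ![0,1,0] ![1,0,0] ![0,0,0] ![1,1,0] rfl rfl rfl rfl rfl rfl
      have e2 := key ![0,1,0] ![1,0,1] ![0,0,1] ![1,1,0] rfl rfl rfl rfl rfl rfl
      have e3 := key ![0,0,0] ![1,0,1] ![0,0,1] ![1,0,0] rfl rfl rfl rfl rfl rfl
      have e4 := key ![0,0,0] ![1,1,1] ![0,1,1] ![1,0,0] rfl rfl rfl rfl rfl rfl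
      have e5 := key ![0,0,1] ![1,1,1] ![0,1,1] ![1,0,1] rfl rfl rfl rfl rfl rfl
      rw [h010, h100, h000, h110] at e1
      rw [h010, h101, h001, h110] at e2
      rw [h000, h101, h001, h100] at e3
      rw [h000, h111, h011, h100] at e4
      rw [h001, h111, h011, h101] at e5
      have hab : a + b = 0 := mul_self_eq_zero.mp (by linear_combination -e1 - e2)
      have ha : a = 0 := mul_self_eq_zero.mp
        (by linear_combination (1/2 : ℂ)*e3 + (1/2 : ℂ)*e5 + ((a - b + c)/2)*hab)
      have hb : b = 0 := by linear_combination hab - ha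
      have hc : c = 0 := mul_self_eq_zero.mp (by linear_combination -e4 + b*ha)
      exact habc ⟨ha, hb, hc⟩
    · -- 1,2 ∈ S, 0 ∉ S : cut at party 0 (complement)
      have key : ∀ f g f' g' : Fin 3 → Fin 2, f' 0 = f 0 → f' 1 = g 1 → f' 2 = g 2 →
          g' 0 = g 0 → g' 1 = f 1 → g' 2 = f 2 → v f * v g = v f' * v g' := by
        intro f g f' g' p1 p2 p3 q1 q2 q3
        refine (rank1 φ χ hfac f g g' f' ?_ ?_ ?_ ?_).trans (mul_comm _ _)
        · intro i hi; fin_cases i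
          exacts [absurd hi m0, q2, q3]
        · intro i hi; fin_cases i
          exacts [q1, absurd m1 hi, absurd m2 hi]
        · intro i hi; fin_cases i
          exacts [absurd hi m0, p2, p3]
        · intro i hi; fin_cases i
          exacts [p1, absurd m1 hi, absurd m2 hi]
      have e1 := key ![0,1,0] ![1,0,0] ![0,0,0] ![1,1,0] rfl rfl rfl rfl rfl rfl
      have e2 := key ![0,1,0] ![1,0,1] ![0,0,1] ![1,1,0] rfl rfl rfl rfl rfl rfl
      have e3 := key ![0,0,0] ![1,0,1] ![0,0,1] ![1,0,0] rfl rfl rfl rfl rfl rfl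
      have e4 := key ![0,0,0] ![1,1,1] ![0,1,1] ![1,0,0] rfl rfl rfl rfl rfl rfl
      have e5 := key ![0,0,1] ![1,1,1] ![0,1,1] ![1,0,1] rfl rfl rfl rfl rfl rfl
      rw [h010, h100, h000, h110] at e1
      rw [h010, h101, h001, h110] at e2
      rw [h000, h101, h001, h100] at e3
      rw [h000, h111, h011, h100] at e4
      rw [h001, h111, h011, h101] at e5
      have hab : a + b = 0 := mul_self_eq_zero.mp (by linear_combination -e1 - e2)
      have ha : a = 0 := mul_self_eq_zero.mp
        (by linear_combination (1/2 : ℂ)*e3 + (1/2 : ℂ)*e5 + ((a - b + c)/2)*hab)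
      have hb : b = 0 := by linear_combination hab - ha
      have hc : c = 0 := mul_self_eq_zero.mp (by linear_combination -e4 + b*ha)
      exact habc ⟨ha, hb, hc⟩
    · -- 1 ∈ S, 0,2 ∉ S : cut at party 1
      have key : ∀ f g f' g' : Fin 3 → Fin 2, f' 0 = g 0 → f' 1 = f 1 → f' 2 = g 2 →
          g' 0 = f 0 → g' 1 = g 1 → g' 2 = f 2 → v f * v g = v f' * v g' := by
        intro f g f' g' p1 p2 p3 q1 q2 q3
        refine rank1 φ χ hfac f g f' g' ?_ ?_ ?_ ?_
        · intro i hi; fin_cases i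
          exacts [absurd hi m0, p2, absurd hi m2]
        · intro i hi; fin_cases i
          exacts [p1, absurd m1 hi, p3]
        · intro i hi; fin_cases i
          exacts [absurd hi m0, q2, absurd hi m2]
        · intro i hi; fin_cases i
          exacts [q1, absurd m1 hi, q3]
      have e1 := key ![1,0,0] ![0,1,0] ![0,0,0] ![1,1,0] rfl rfl rfl rfl rfl rfl
      have e2 := key ![1,0,0] ![0,1,1] ![0,0,1] ![1,1,0] rfl rfl rfl rfl rfl rfl
      have e3 := key ![0,0,0] ![1,1,1] ![1,0,1] ![0,1,0] rfl rfl rfl rfl rfl rfl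
      have e4 := key ![0,0,1] ![1,1,1] ![1,0,1] ![0,1,1] rfl rfl rfl rfl rfl rfl
      rw [h100, h010, h000, h110] at e1
      rw [h100, h011, h001, h110] at e2
      rw [h000, h111, h101, h010] at e3
      rw [h001, h111, h101, h011] at e4
      have ha : a = 0 := mul_self_eq_zero.mp (by linear_combination -e1 + e2)
      have hb : b = 0 := mul_self_eq_zero.mp (by linear_combination e4 + c*ha)
      have hc : c = 0 := mul_self_eq_zero.mp (by linear_combination -e3 + b*ha + b*hb)
      exact habc ⟨ha, hb, hc⟩
    · -- 2 ∈ S, 0,1 ∉ S : cut at party 2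
      have key : ∀ f g f' g' : Fin 3 → Fin 2, f' 0 = g 0 → f' 1 = g 1 → f' 2 = f 2 →
          g' 0 = f 0 → g' 1 = f 1 → g' 2 = g 2 → v f * v g = v f' * v g' := by
        intro f g f' g' p1 p2 p3 q1 q2 q3
        refine rank1 φ χ hfac f g f' g' ?_ ?_ ?_ ?_
        · intro i hi; fin_cases i
          exacts [absurd hi m0, absurd hi m1, p3]
        · intro i hi; fin_cases i
          exacts [p1, p2, absurd m2 hi]
        · intro i hi; fin_cases i
          exacts [absurd hi m0, absurd hi m1, q3]
        · intro i hi; fin_cases i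
          exacts [q1, q2, absurd m2 hi]
      have e1 := key ![1,1,0] ![0,0,1] ![0,0,0] ![1,1,1] rfl rfl rfl rfl rfl rfl
      have e2 := key ![0,1,0] ![1,0,1] ![1,0,0] ![0,1,1] rfl rfl rfl rfl rfl rfl
      have e3 := key ![0,0,0] ![0,1,1] ![0,1,0] ![0,0,1] rfl rfl rfl rfl rfl rfl
      rw [h110, h001, h000, h111] at e1
      rw [h010, h101, h100, h011] at e2
      rw [h000, h011, h010, h001] at e3
      have hc : c = 0 := mul_self_eq_zero.mp (by linear_combination e1)
      have hb : b = 0 := mul_self_eq_zero.mp (by linear_combination -e2)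
      have ha : a = 0 := mul_self_eq_zero.mp (by linear_combination -e3 - a*hb + c*hb)
      exact habc ⟨ha, hb, hc⟩
    · -- none in S : contradicts nonemptiness
      exact (fun i : Fin 3 => by fin_cases i <;> assumption : ∀ i : Fin 3, i ∉ S) s0 hs0
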